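/- arXiv:2605.28885 — 3 statements merged into one kernel-verified Lean document; each statement's English description precedes it below -/
import Mathlib

section
/- Let P, Q be positive definite and H := P^(-1/4) Q^(1/2) P^(-1/4). If B is positive definite and commutes with H, then the matrix R := P^(-1/4) B P^(1/2) B P^(-1/4) is positive definite and satisfies Pol(R^(1/2) P^(1/2)) = Pol(R^(1/2) Q^(1/2)). -/
open scoped Classical
open Matrix
open scoped ComplexOrder


noncomputable def mpow {d : ℕ} (A : Matrix (Fin d) (Fin d) ℂ) (t : ℝ) : Matrix (Fin d) (Fin d) ℂ :=
  if hA : A.IsHermitian then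
    (hA.eigenvectorUnitary : Matrix (Fin d) (Fin d) ℂ) *
      Matrix.diagonal (fun i => ((hA.eigenvalues i ^ t : ℝ) : ℂ)) *
      (star (hA.eigenvectorUnitary : Matrix (Fin d) (Fin d) ℂ))
  else 0


/-- The unitary polar factor of an invertible matrix: the unique unitary `U` with
`star U * X` positive definite (junk value `1` if none exists). -/
noncomputable def polar {d : ℕ} (X : Matrix (Fin d) (Fin d) ℂ) : Matrix (Fin d) (Fin d) ℂ :=
  if h : ∃ U : Matrix (Fin d) (Fin d) ℂ, U ∈ Matrix.unitaryGroup (Fin d) ℂ ∧ (star U * X).PosDef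
  then h.choose else 1

section Aux

variable {d : ℕ}

lemma mpow_eq {A : Matrix (Fin d) (Fin d) ℂ} (hA : A.IsHermitian) (t : ℝ) :
    mpow A t = (hA.eigenvectorUnitary : Matrix (Fin d) (Fin d) ℂ) *
      Matrix.diagonal (fun i => ((hA.eigenvalues i ^ t : ℝ) : ℂ)) *
      (star (hA.eigenvectorUnitary : Matrix (Fin d) (Fin d) ℂ)) := dif_pos hA

lemma star_mul_self_eigU {A : Matrix (Fin d) (Fin d) ℂ} (hA : A.IsHermitian) :
    star (hA.eigenvectorUnitary : Matrix (Fin d) (Fin d) ℂ) *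
      (hA.eigenvectorUnitary : Matrix (Fin d) (Fin d) ℂ) = 1 :=
  Matrix.mem_unitaryGroup_iff'.mp hA.eigenvectorUnitary.2

lemma mul_star_self_eigU {A : Matrix (Fin d) (Fin d) ℂ} (hA : A.IsHermitian) :
    (hA.eigenvectorUnitary : Matrix (Fin d) (Fin d) ℂ) *
      star (hA.eigenvectorUnitary : Matrix (Fin d) (Fin d) ℂ) = 1 :=
  Matrix.mem_unitaryGroup_iff.mp hA.eigenvectorUnitary.2

lemma mpow_isHermitian {A : Matrix (Fin d) (Fin d) ℂ} (hA : A.IsHermitian) (t : ℝ) :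
    (mpow A t).IsHermitian := by
  rw [mpow_eq hA]
  exact Matrix.isHermitian_mul_mul_conjTranspose _
    (Matrix.isHermitian_diagonal_of_self_adjoint _
      (funext fun i => Complex.conj_ofReal _))

lemma posdef_conj {A N : Matrix (Fin d) (Fin d) ℂ} (hA : A.PosDef) (hN : IsUnit N) :
    (Nᴴ * A * N).PosDef := by
  refine Matrix.PosDef.of_dotProduct_mulVec_pos (Matrix.isHermitian_conjTranspose_mul_mul N hA.1) fun x hx => ?_
  have hNx : N *ᵥ x ≠ 0 := by
    intro h
    exact hx ((Matrix.mulVec_injective_iff_isUnit.mpr hN) (h.trans (Matrix.mulVec_zero N).symm))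
  have := hA.dotProduct_mulVec_pos hNx
  calc (0:ℂ) < star (N *ᵥ x) ⬝ᵥ (A *ᵥ (N *ᵥ x)) := this
    _ = star x ⬝ᵥ ((Nᴴ * A * N) *ᵥ x) := by
        rw [← Matrix.mulVec_mulVec, ← Matrix.mulVec_mulVec, Matrix.dotProduct_mulVec (star x) Nᴴ,
          Matrix.vecMul_conjTranspose, star_star]

lemma mpow_posDef {A : Matrix (Fin d) (Fin d) ℂ} (hA : A.PosDef) (t : ℝ) :
    (mpow A t).PosDef := by
  rw [mpow_eq hA.1]
  have hD : (Matrix.diagonal (fun i => ((hA.1.eigenvalues i ^ t : ℝ) : ℂ))).PosDef := by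
    rw [Matrix.posDef_diagonal_iff]
    intro i
    have : (0:ℝ) < hA.1.eigenvalues i ^ t := Real.rpow_pos_of_pos (hA.eigenvalues_pos i) t
    exact_mod_cast this
  have hN : IsUnit (star (hA.1.eigenvectorUnitary : Matrix (Fin d) (Fin d) ℂ)) :=
    isUnit_iff_exists.mpr ⟨(hA.1.eigenvectorUnitary : Matrix (Fin d) (Fin d) ℂ),
      star_mul_self_eigU hA.1, mul_star_self_eigU hA.1⟩
  have := posdef_conj hD hN
  simpa only [Matrix.conjTranspose_conjTranspose, Matrix.star_eq_conjTranspose] using this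

lemma mpow_add {A : Matrix (Fin d) (Fin d) ℂ} (hA : A.PosDef) (s t : ℝ) :
    mpow A s * mpow A t = mpow A (s + t) := by
  have h1 := star_mul_self_eigU hA.1
  have hsU : ∀ X, star (hA.1.eigenvectorUnitary : Matrix (Fin d) (Fin d) ℂ) *
      ((hA.1.eigenvectorUnitary : Matrix (Fin d) (Fin d) ℂ) * X) = X := fun X => by
    rw [← Matrix.mul_assoc, h1, Matrix.one_mul]
  have hdiag : (Matrix.diagonal (fun i => ((hA.1.eigenvalues i ^ s : ℝ) : ℂ))) *
      (Matrix.diagonal (fun i => ((hA.1.eigenvalues i ^ t : ℝ) : ℂ))) =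
      (Matrix.diagonal (fun i => ((hA.1.eigenvalues i ^ (s + t) : ℝ) : ℂ))) := by
    rw [Matrix.diagonal_mul_diagonal]
    exact congrArg Matrix.diagonal (funext fun i => by
      rw [← Complex.ofReal_mul, ← Real.rpow_add (hA.eigenvalues_pos i)])
  rw [mpow_eq hA.1 s, mpow_eq hA.1 t, mpow_eq hA.1 (s + t), ← hdiag]
  simp only [Matrix.mul_assoc, hsU]

lemma mpow_zero {A : Matrix (Fin d) (Fin d) ℂ} (hA : A.IsHermitian) : mpow A 0 = 1 := by
  rw [mpow_eq hA]
  simp only [Real.rpow_zero, Complex.ofReal_one]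
  rw [Matrix.diagonal_one, Matrix.mul_one, mul_star_self_eigU hA]

lemma mpow_one {A : Matrix (Fin d) (Fin d) ℂ} (hA : A.IsHermitian) : mpow A 1 = A := by
  rw [mpow_eq hA]
  simp only [Real.rpow_one]
  exact (hA.spectral_theorem).symm

lemma mpow_comm {A C : Matrix (Fin d) (Fin d) ℂ} (hA : A.IsHermitian) (t : ℝ)
    (h : A * C = C * A) : mpow A t * C = C * mpow A t := by
  have h1 := star_mul_self_eigU hA
  have h2 := mul_star_self_eigU hA
  set U := (hA.eigenvectorUnitary : Matrix (Fin d) (Fin d) ℂ) with hU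
  have hsU : ∀ X, star U * (U * X) = X := fun X => by
    rw [← Matrix.mul_assoc, h1, Matrix.one_mul]
  have hUs : ∀ X, U * (star U * X) = X := fun X => by
    rw [← Matrix.mul_assoc, h2, Matrix.one_mul]
  set D := Matrix.diagonal (fun i => ((hA.eigenvalues i : ℝ) : ℂ)) with hD
  set Df := Matrix.diagonal (fun i => ((hA.eigenvalues i ^ t : ℝ) : ℂ)) with hDf
  set M := star U * (C * U) with hM
  have hAspec : A = U * D * star U := hA.spectral_theorem
  have hDM : D * M = M * D := by
    have e1 : D * M = star U * (A * (C * U)) := by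
      rw [hAspec]; simp only [Matrix.mul_assoc, hsU, hM]
    have e2 : star U * (A * (C * U)) = star U * (C * (A * U)) := by
      rw [← Matrix.mul_assoc A C, h, Matrix.mul_assoc]
    have e3 : star U * (C * (A * U)) = M * D := by
      rw [hAspec]; simp only [Matrix.mul_assoc, hsU, h1, Matrix.mul_one, hM]
    rw [e1, e2, e3]
  have hDfM : Df * M = M * Df := by
    ext i j
    have hij : ((hA.eigenvalues i : ℝ) : ℂ) * M i j = M i j * ((hA.eigenvalues j : ℝ) : ℂ) := by
      have := congrFun (congrFun hDM i) j
      simpa [hD, Matrix.diagonal_mul, Matrix.mul_diagonal, mul_comm] using this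
    by_cases he : hA.eigenvalues i = hA.eigenvalues j
    · simp [hDf, Matrix.diagonal_mul, Matrix.mul_diagonal, he, mul_comm]
    · have hM0 : M i j = 0 := by
        have h0 : (((hA.eigenvalues i : ℝ) : ℂ) - ((hA.eigenvalues j : ℝ) : ℂ)) * M i j = 0 := by
          rw [sub_mul, hij]; ring
        rcases mul_eq_zero.mp h0 with h0 | h0
        · exact absurd (by exact_mod_cast sub_eq_zero.mp h0) he
        · exact h0
      simp [hDf, Matrix.diagonal_mul, Matrix.mul_diagonal, hM0]
  have hCU : C * U = U * M := by rw [hM]; simp only [Matrix.mul_assoc, hUs]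
  rw [mpow_eq hA]
  calc U * Df * star U * C
      = U * (Df * (M * star U)) := by
        rw [hM]; simp only [Matrix.mul_assoc, h2, Matrix.mul_one, hUs]
    _ = U * (M * (Df * star U)) := by rw [← Matrix.mul_assoc Df M, hDfM, Matrix.mul_assoc]
    _ = (C * U) * (Df * star U) := by rw [hCU]; simp only [Matrix.mul_assoc]
    _ = C * (U * Df * star U) := by simp only [Matrix.mul_assoc]

lemma posDef_mul_of_comm {H B : Matrix (Fin d) (Fin d) ℂ} (hH : H.PosDef) (hB : B.PosDef)
    (h : B * H = H * B) : (H * B).PosDef := by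
  have hS : mpow B (1/2) * H = H * mpow B (1/2) := mpow_comm hB.1 _ h
  have hSS : mpow B (1/2) * mpow B (1/2) = B := by
    have e : (1/2 + 1/2 : ℝ) = 1 := by norm_num
    rw [mpow_add hB, e, mpow_one hB.1]
  have hherm := mpow_isHermitian hB.1 (1/2)
  have key : H * B = (mpow B (1/2))ᴴ * H * mpow B (1/2) := by
    rw [hherm.eq]
    conv_lhs => rw [← hSS]
    rw [← Matrix.mul_assoc, ← hS]
  rw [key]
  exact posdef_conj hH (mpow_posDef hB (1/2)).isUnit

lemma polar_eq_of {X U : Matrix (Fin d) (Fin d) ℂ} (hX : IsUnit X)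
    (hU : U ∈ Matrix.unitaryGroup (Fin d) ℂ) (hpos : (star U * X).PosDef) : polar X = U := by
  have hex : ∃ V : Matrix (Fin d) (Fin d) ℂ,
      V ∈ Matrix.unitaryGroup (Fin d) ℂ ∧ (star V * X).PosDef := ⟨U, hU, hpos⟩
  have h1 : polar X = hex.choose := dif_pos hex
  obtain ⟨hV, hVpos⟩ := hex.choose_spec
  set V := hex.choose with hVdef
  have key : ∀ (W : Matrix (Fin d) (Fin d) ℂ), W ∈ Matrix.unitaryGroup (Fin d) ℂ →
      (star W * X).PosDef → (star W * X) ^ 2 = Xᴴ * X := by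
    intro W hW hp
    calc (star W * X) ^ 2 = (star W * X)ᴴ * (star W * X) := by rw [pow_two, hp.1.eq]
      _ = Xᴴ * ((W * star W) * X) := by
          simp only [Matrix.conjTranspose_mul, Matrix.conjTranspose_conjTranspose,
            Matrix.star_eq_conjTranspose, Matrix.mul_assoc]
      _ = Xᴴ * X := by rw [Matrix.mem_unitaryGroup_iff.mp hW, Matrix.one_mul]
  have hsq : (star V * X) ^ 2 = (star U * X) ^ 2 := by
    rw [key V hV hVpos, key U hU hpos]
  have heq : star V * X = star U * X := by
    open scoped MatrixOrder in
    exact (CFC.sq_eq_sq_iff _ _ hVpos.posSemidef.nonneg hpos.posSemidef.nonneg).mp hsq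
  have hXdet : IsUnit X.det := (Matrix.isUnit_iff_isUnit_det X).mp hX
  have hstar : star V = star U := by
    have h2 := congrArg (fun Y => Y * X⁻¹) heq
    simpa only [Matrix.mul_assoc, Matrix.mul_nonsing_inv X hXdet, Matrix.mul_one] using h2
  have hVU : V = U := by
    have := congrArg star hstar
    simpa only [star_star] using this
  rw [h1, hVU]

lemma word_calc {T Ti B Bi S Q2 H : Matrix (Fin d) (Fin d) ℂ}
    (hTiT : Ti * T = 1) (hTTi : T * Ti = 1)
    (hBiB : Bi * B = 1) (hBBi : B * Bi = 1)
    (hSS : S * S = Ti * B * (T * T) * B * Ti)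
    (hQ2 : Q2 = T * (H * T)) :
    (Ti * (Bi * (T * S))) * (S * (T * (Bi * Ti))) = 1 ∧
    (Ti * (Bi * (T * S))) * (S * (T * T)) = T * (B * T) ∧
    (Ti * (Bi * (T * S))) * (S * Q2) = T * (B * (H * T)) := by
  have cSS : ∀ X, S * (S * X) = Ti * (B * (T * (T * (B * (Ti * X))))) := fun X => by
    rw [← Matrix.mul_assoc, hSS]; simp only [Matrix.mul_assoc]
  have cTiT : ∀ X, Ti * (T * X) = X := fun X => by
    rw [← Matrix.mul_assoc, hTiT, Matrix.one_mul]
  have cTTi : ∀ X, T * (Ti * X) = X := fun X => by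
    rw [← Matrix.mul_assoc, hTTi, Matrix.one_mul]
  have cBiB : ∀ X, Bi * (B * X) = X := fun X => by
    rw [← Matrix.mul_assoc, hBiB, Matrix.one_mul]
  have cBBi : ∀ X, B * (Bi * X) = X := fun X => by
    rw [← Matrix.mul_assoc, hBBi, Matrix.one_mul]
  refine ⟨?_, ?_, ?_⟩ <;>
    simp only [hQ2, Matrix.mul_assoc, cSS, cTiT, cTTi, cBiB, cBBi, hTiT, hTTi, hBiB, hBBi,
      Matrix.mul_one, Matrix.one_mul]

end Aux

/-- If `B` is positive definite and commutes with `H = P^(-1/4) Q^(1/2) P^(-1/4)`, then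
`R = P^(-1/4) B P^(1/2) B P^(-1/4)` is positive definite and
`Pol(R^(1/2) P^(1/2)) = Pol(R^(1/2) Q^(1/2))`. -/
theorem holevo_base_sufficient {d : ℕ} {P Q B : Matrix (Fin d) (Fin d) ℂ}
    (hP : P.PosDef) (hQ : Q.PosDef) (hB : B.PosDef)
    (hcomm : B * (mpow P (-(1/4)) * mpow Q (1/2) * mpow P (-(1/4)))
           = (mpow P (-(1/4)) * mpow Q (1/2) * mpow P (-(1/4))) * B) :
    (mpow P (-(1/4)) * B * mpow P (1/2) * B * mpow P (-(1/4))).PosDef ∧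
    polar (mpow (mpow P (-(1/4)) * B * mpow P (1/2) * B * mpow P (-(1/4))) (1/2) * mpow P (1/2))
      = polar (mpow (mpow P (-(1/4)) * B * mpow P (1/2) * B * mpow P (-(1/4))) (1/2) * mpow Q (1/2)) := by
  set Ti := mpow P (-(1/4)) with hTi_def
  set P2 := mpow P (1/2) with hP2_def
  set Q2 := mpow Q (1/2) with hQ2_def
  set T := mpow P (1/4) with hT_def
  set H := Ti * Q2 * Ti with hH_def
  set R := Ti * B * P2 * B * Ti with hR_def
  have hTipos : Ti.PosDef := by rw [hTi_def]; exact mpow_posDef hP _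
  have hTpos : T.PosDef := by rw [hT_def]; exact mpow_posDef hP _
  have hP2pos : P2.PosDef := by rw [hP2_def]; exact mpow_posDef hP _
  have hQ2pos : Q2.PosDef := by rw [hQ2_def]; exact mpow_posDef hQ _
  have hTiherm : Ti.IsHermitian := hTipos.1
  have hTherm : T.IsHermitian := hTpos.1
  have hTiT : Ti * T = 1 := by
    have e : (-(1/4) + 1/4 : ℝ) = 0 := by norm_num
    rw [hTi_def, hT_def, mpow_add hP, e, mpow_zero hP.1]
  have hTTi : T * Ti = 1 := by
    have e : (1/4 + -(1/4) : ℝ) = 0 := by norm_num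
    rw [hTi_def, hT_def, mpow_add hP, e, mpow_zero hP.1]
  have hP2TT : P2 = T * T := by
    have e : (1/4 + 1/4 : ℝ) = 1/2 := by norm_num
    rw [hP2_def, hT_def, mpow_add hP, e]
  have hHpos : H.PosDef := by
    rw [hH_def]
    have := posdef_conj hQ2pos hTipos.isUnit
    rwa [hTiherm.eq] at this
  have hRpos : R.PosDef := by
    have h1 : R = (B * Ti)ᴴ * P2 * (B * Ti) := by
      rw [Matrix.conjTranspose_mul, hTiherm.eq, hB.1.eq, hR_def]
      simp only [Matrix.mul_assoc]
    rw [h1]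
    exact posdef_conj hP2pos (hB.isUnit.mul hTipos.isUnit)
  refine ⟨hRpos, ?_⟩
  have hSherm : (mpow R (1/2)).IsHermitian := mpow_isHermitian hRpos.1 _
  have hSpos : (mpow R (1/2)).PosDef := mpow_posDef hRpos _
  have hSS : mpow R (1/2) * mpow R (1/2) = R := by
    have e : (1/2 + 1/2 : ℝ) = 1 := by norm_num
    rw [mpow_add hRpos, e, mpow_one hRpos.1]
  set S := mpow R (1/2) with hS_def
  have hBdet : IsUnit B.det := (Matrix.isUnit_iff_isUnit_det B).mp hB.isUnit
  have hBiB : B⁻¹ * B = 1 := Matrix.nonsing_inv_mul B hBdet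
  have hBBi : B * B⁻¹ = 1 := Matrix.mul_nonsing_inv B hBdet
  have hBinvherm : (B⁻¹).IsHermitian := hB.1.inv
  have hQ2TH : Q2 = T * (H * T) := by
    rw [hH_def]
    simp only [Matrix.mul_assoc, hTiT, Matrix.mul_one]
    rw [← Matrix.mul_assoc, hTTi, Matrix.one_mul]
  have hHB : (H * B).PosDef := posDef_mul_of_comm hHpos hB hcomm
  have hSSfold : S * S = Ti * B * (T * T) * B * Ti := by rw [hSS, hR_def, hP2TT]
  obtain ⟨w1, w2, w3⟩ := word_calc hTiT hTTi hBiB hBBi hSSfold hQ2TH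
  set U := S * (T * (B⁻¹ * Ti)) with hU_def
  have hstarU : star U = Ti * (B⁻¹ * (T * S)) := by
    rw [hU_def]
    simp only [Matrix.star_eq_conjTranspose, Matrix.conjTranspose_mul, hSherm.eq, hTherm.eq,
      hTiherm.eq, hBinvherm.eq, Matrix.mul_assoc]
  have hUmem : U ∈ Matrix.unitaryGroup (Fin d) ℂ := by
    rw [Matrix.mem_unitaryGroup_iff', hstarU, hU_def]
    exact w1
  have hposP : (star U * (S * P2)).PosDef := by
    rw [hstarU, hP2TT, w2]
    have := posdef_conj hB hTpos.isUnit
    rwa [hTherm.eq, Matrix.mul_assoc] at this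
  have hposQ : (star U * (S * Q2)).PosDef := by
    rw [hstarU, w3]
    have e : T * (B * (H * T)) = Tᴴ * (H * B) * T := by
      rw [hTherm.eq, ← Matrix.mul_assoc B H, hcomm]
      simp only [Matrix.mul_assoc]
    rw [e]
    exact posdef_conj hHB hTpos.isUnit
  have hXP : IsUnit (S * P2) := hSpos.isUnit.mul hP2pos.isUnit
  have hXQ : IsUnit (S * Q2) := hSpos.isUnit.mul hQ2pos.isUnit
  rw [polar_eq_of hXP hUmem hposP, polar_eq_of hXQ hUmem hposQ]
end

section
/- Let P, Q, R be positive definite d×d matrices such that Pol(R^(1/2) P^(1/2)) = Pol(R^(1/2) Q^(1/2)). Then the generalized fidelity F_R(P,Q) = Tr[(R^(1/2) P R^(1/2))^(1/2) R^(-1) (R^(1/2) Q R^(1/2))^(1/2)] equals the Holevo fidelity Tr(P^(1/2) Q^(1/2)). -/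
open scoped Classical
open Matrix
open scoped ComplexOrder


/-- Generalized (Afham--Ferrie) fidelity with base `R`. -/
noncomputable def genFid {d : ℕ} (R P Q : Matrix (Fin d) (Fin d) ℂ) : ℂ :=
  Matrix.trace (mpow (mpow R (1/2) * P * mpow R (1/2)) (1/2) * R⁻¹ *
    mpow (mpow R (1/2) * Q * mpow R (1/2)) (1/2))

noncomputable def Matrix.PosSemidef.sqrt {d : ℕ} {A : Matrix (Fin d) (Fin d) ℂ}
    (hA : A.PosSemidef) : Matrix (Fin d) (Fin d) ℂ :=
  (hA.1.eigenvectorUnitary : Matrix (Fin d) (Fin d) ℂ) *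
    Matrix.diagonal (RCLike.ofReal ∘ Real.sqrt ∘ hA.1.eigenvalues) *
    (star (hA.1.eigenvectorUnitary : Matrix (Fin d) (Fin d) ℂ))

open scoped MatrixOrder in
lemma Matrix.PosSemidef.sqrt_eq_cfcSqrt {d : ℕ} {A : Matrix (Fin d) (Fin d) ℂ}
    (hA : A.PosSemidef) : hA.sqrt = CFC.sqrt A := by
  rw [CFC.sqrt_eq_cfc, cfc_nnreal_eq_real _ A, hA.1.cfc_eq]
  simp only [IsHermitian.cfc, Unitary.conjStarAlgAut_apply, Matrix.PosSemidef.sqrt]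
  congr 3
  funext i
  simp only [Function.comp_apply, Real.coe_sqrt, Real.coe_toNNReal _ (hA.eigenvalues_nonneg i)]

open scoped MatrixOrder in
lemma Matrix.PosSemidef.posSemidef_sqrt {d : ℕ} {A : Matrix (Fin d) (Fin d) ℂ}
    (hA : A.PosSemidef) : hA.sqrt.PosSemidef := by
  rw [hA.sqrt_eq_cfcSqrt]
  exact (CFC.sqrt_nonneg A).posSemidef

open scoped MatrixOrder in
lemma Matrix.PosSemidef.sqrt_mul_self {d : ℕ} {A : Matrix (Fin d) (Fin d) ℂ}
    (hA : A.PosSemidef) : hA.sqrt * hA.sqrt = A := by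
  rw [hA.sqrt_eq_cfcSqrt]
  exact CFC.sqrt_mul_sqrt_self A hA.nonneg

open scoped MatrixOrder in
lemma Matrix.PosSemidef.eq_sqrt_of_sq_eq {d : ℕ} {A B : Matrix (Fin d) (Fin d) ℂ}
    (hB : B.PosSemidef) (hA : A.PosSemidef) (h : B ^ 2 = A) : B = hA.sqrt := by
  rw [hA.sqrt_eq_cfcSqrt]
  exact (CFC.sqrt_unique (by rw [← sq]; exact h) hB.nonneg).symm

lemma mpow_half_eq_sqrt {d : ℕ} {A : Matrix (Fin d) (Fin d) ℂ} (hA : A.PosSemidef) :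
    mpow A (1/2) = hA.sqrt := by
  rw [mpow, dif_pos hA.1, Matrix.PosSemidef.sqrt]
  have : (RCLike.ofReal ∘ Real.sqrt ∘ hA.1.eigenvalues : Fin d → ℂ) =
      fun i => ((hA.1.eigenvalues i ^ ((1:ℝ)/2) : ℝ) : ℂ) := by
    funext i
    simp [Function.comp, Real.sqrt_eq_rpow]
  rw [this]

lemma posDef_of_posSemidef_isUnit {d : ℕ} {A : Matrix (Fin d) (Fin d) ℂ}
    (hA : A.PosSemidef) (h : IsUnit A.det) : A.PosDef := by
  exact hA.posDef_iff_isUnit.mpr ((Matrix.isUnit_iff_isUnit_det A).mpr h)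

lemma exists_polar {d : ℕ} {X : Matrix (Fin d) (Fin d) ℂ} (hX : IsUnit X.det) :
    ∃ U : Matrix (Fin d) (Fin d) ℂ, U ∈ Matrix.unitaryGroup (Fin d) ℂ ∧ (star U * X).PosDef := by
  have hK : (Xᴴ * X).PosSemidef := Matrix.posSemidef_conjTranspose_mul_self X
  have hKdet : IsUnit (Xᴴ * X).det := by
    rw [Matrix.det_mul, Matrix.det_conjTranspose]
    exact hX.star.mul hX
  set H := hK.sqrt with hHdef
  have hHps : H.PosSemidef := hK.posSemidef_sqrt
  have hH2 : H * H = Xᴴ * X := hK.sqrt_mul_self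
  have hHdet : IsUnit H.det := by
    rw [isUnit_iff_ne_zero]
    intro h0
    have : (Xᴴ * X).det = 0 := by rw [← hH2, Matrix.det_mul, h0, zero_mul]
    rw [this] at hKdet
    exact (not_isUnit_zero hKdet)
  have hHpd : H.PosDef := posDef_of_posSemidef_isUnit hHps hHdet
  have hstar : star (X * H⁻¹) = H⁻¹ * Xᴴ := by
    rw [star_eq_conjTranspose, Matrix.conjTranspose_mul, Matrix.conjTranspose_nonsing_inv,
      hHps.1.eq]
  refine ⟨X * H⁻¹, ?_, ?_⟩
  · rw [Matrix.mem_unitaryGroup_iff', hstar, Matrix.mul_assoc, ← Matrix.mul_assoc Xᴴ, ← hH2]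
    rw [show H * H * H⁻¹ = H from by
      rw [Matrix.mul_assoc, Matrix.mul_nonsing_inv _ hHdet, Matrix.mul_one]]
    exact Matrix.nonsing_inv_mul _ hHdet
  · have : star (X * H⁻¹) * X = H := by
      rw [hstar, Matrix.mul_assoc, ← hH2, ← Matrix.mul_assoc,
        Matrix.nonsing_inv_mul _ hHdet, Matrix.one_mul]
    rw [this]; exact hHpd

lemma polar_spec {d : ℕ} {X : Matrix (Fin d) (Fin d) ℂ}
    (h : ∃ U : Matrix (Fin d) (Fin d) ℂ, U ∈ Matrix.unitaryGroup (Fin d) ℂ ∧ (star U * X).PosDef) :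
    polar X ∈ Matrix.unitaryGroup (Fin d) ℂ ∧ (star (polar X) * X).PosDef := by
  unfold polar
  rw [dif_pos h]
  exact h.choose_spec

lemma mpow_half_mul_conjTranspose_self {d : ℕ} {X U : Matrix (Fin d) (Fin d) ℂ}
    (hU : U ∈ Matrix.unitaryGroup (Fin d) ℂ) (hH : (star U * X).PosDef) :
    mpow (X * Xᴴ) (1/2) = U * Xᴴ := by
  have h1 : U * star U = 1 := Matrix.mem_unitaryGroup_iff.mp hU
  have h2 : star U * U = 1 := Matrix.mem_unitaryGroup_iff'.mp hU
  have hXXps : (X * Xᴴ).PosSemidef := Matrix.posSemidef_self_mul_conjTranspose X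
  have hXH : Xᴴ = star U * X * star U := by
    calc Xᴴ = (U * (star U * X))ᴴ := by rw [← Matrix.mul_assoc, h1, Matrix.one_mul]
      _ = (star U * X)ᴴ * Uᴴ := Matrix.conjTranspose_mul _ _
      _ = star U * X * star U := by
          rw [hH.1.eq, ← Matrix.star_eq_conjTranspose]
  have hpos : (U * Xᴴ).PosSemidef := by
    rw [hXH, ← Matrix.mul_assoc, Matrix.star_eq_conjTranspose U]
    exact hH.posSemidef.mul_mul_conjTranspose_same U
  have hsq : (U * Xᴴ) ^ 2 = X * Xᴴ := by
    rw [pow_two, hXH]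
    simp only [Matrix.mul_assoc]
    rw [show star U * (U * (star U * (X * star U))) = star U * (X * star U) from by
      rw [← Matrix.mul_assoc, h2, Matrix.one_mul]]
    rw [← Matrix.mul_assoc U (star U), h1, Matrix.one_mul]
  rw [mpow_half_eq_sqrt hXXps]
  exact (hpos.eq_sqrt_of_sq_eq hXXps hsq).symm

/-- If `Pol(R^(1/2) P^(1/2)) = Pol(R^(1/2) Q^(1/2))`, then the generalized fidelity
`F_R(P,Q)` equals the Holevo fidelity `Tr(P^(1/2) Q^(1/2))`. -/
theorem genFid_eq_holevo_of_polar_eq {d : ℕ} {P Q R : Matrix (Fin d) (Fin d) ℂ}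
    (hP : P.PosDef) (hQ : Q.PosDef) (hR : R.PosDef)
    (hpol : polar (mpow R (1/2) * mpow P (1/2)) = polar (mpow R (1/2) * mpow Q (1/2))) :
    genFid R P Q = Matrix.trace (mpow P (1/2) * mpow Q (1/2)) := by
  set S := mpow R (1/2) with hSdef
  set Ph := mpow P (1/2) with hPhdef
  set Qh := mpow Q (1/2) with hQhdef
  have hSps : S.PosSemidef := by
    rw [hSdef, mpow_half_eq_sqrt hR.posSemidef]
    exact hR.posSemidef.posSemidef_sqrt
  have hSS : S * S = R := by
    rw [hSdef, mpow_half_eq_sqrt hR.posSemidef]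
    exact hR.posSemidef.sqrt_mul_self
  have hPps : Ph.PosSemidef := by
    rw [hPhdef, mpow_half_eq_sqrt hP.posSemidef]
    exact hP.posSemidef.posSemidef_sqrt
  have hPP : Ph * Ph = P := by
    rw [hPhdef, mpow_half_eq_sqrt hP.posSemidef]
    exact hP.posSemidef.sqrt_mul_self
  have hQps : Qh.PosSemidef := by
    rw [hQhdef, mpow_half_eq_sqrt hQ.posSemidef]
    exact hQ.posSemidef.posSemidef_sqrt
  have hQQ : Qh * Qh = Q := by
    rw [hQhdef, mpow_half_eq_sqrt hQ.posSemidef]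
    exact hQ.posSemidef.sqrt_mul_self
  have hSdet : IsUnit S.det := isUnit_iff_ne_zero.mpr fun h0 => hR.det_pos.ne'
    (by rw [← hSS, Matrix.det_mul, h0, zero_mul])
  have hPdet : IsUnit Ph.det := isUnit_iff_ne_zero.mpr fun h0 => hP.det_pos.ne'
    (by rw [← hPP, Matrix.det_mul, h0, zero_mul])
  have hQdet : IsUnit Qh.det := isUnit_iff_ne_zero.mpr fun h0 => hQ.det_pos.ne'
    (by rw [← hQQ, Matrix.det_mul, h0, zero_mul])
  set A := S * Ph with hAdef
  set B := S * Qh with hBdef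
  have hAdet : IsUnit A.det := by rw [hAdef, Matrix.det_mul]; exact hSdet.mul hPdet
  have hBdet : IsUnit B.det := by rw [hBdef, Matrix.det_mul]; exact hSdet.mul hQdet
  obtain ⟨hUuni, hUA⟩ := polar_spec (exists_polar hAdet)
  obtain ⟨hUuni', hUB⟩ := polar_spec (exists_polar hBdet)
  rw [← hpol] at hUB hUuni'
  set U := polar A with hUdef
  have hAH : Aᴴ = Ph * S := by
    rw [hAdef, Matrix.conjTranspose_mul, hSps.1.eq, hPps.1.eq]
  have hBH : Bᴴ = Qh * S := by
    rw [hBdef, Matrix.conjTranspose_mul, hSps.1.eq, hQps.1.eq]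
  have hSPS : S * P * S = A * Aᴴ := by
    rw [hAH, hAdef, ← hPP]
    simp only [Matrix.mul_assoc]
  have hSQS : S * Q * S = B * Bᴴ := by
    rw [hBH, hBdef, ← hQQ]
    simp only [Matrix.mul_assoc]
  have key1 : mpow (S * P * S) (1/2) = U * Aᴴ := by
    rw [hSPS]; exact mpow_half_mul_conjTranspose_self hUuni hUA
  have key2 : mpow (S * Q * S) (1/2) = B * Uᴴ := by
    rw [hSQS]
    have h1 : mpow (B * Bᴴ) (1/2) = U * Bᴴ := mpow_half_mul_conjTranspose_self hUuni' hUB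
    have hherm : (mpow (B * Bᴴ) (1/2)).IsHermitian := by
      rw [mpow_half_eq_sqrt (Matrix.posSemidef_self_mul_conjTranspose B)]
      exact (Matrix.posSemidef_self_mul_conjTranspose B).posSemidef_sqrt.1
    calc mpow (B * Bᴴ) (1/2) = (mpow (B * Bᴴ) (1/2))ᴴ := hherm.eq.symm
      _ = B * Uᴴ := by rw [h1, Matrix.conjTranspose_mul, Matrix.conjTranspose_conjTranspose]
  have hSRS : S * R⁻¹ * S = 1 := by
    rw [← hSS, Matrix.mul_inv_rev, ← Matrix.mul_assoc S S⁻¹ S⁻¹,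
      Matrix.mul_nonsing_inv _ hSdet, Matrix.one_mul, Matrix.nonsing_inv_mul _ hSdet]
  have hUU : Uᴴ * U = 1 := by
    have := Matrix.mem_unitaryGroup_iff'.mp hUuni
    rwa [Matrix.star_eq_conjTranspose] at this
  rw [genFid, key1, key2]
  rw [show U * Aᴴ * R⁻¹ * (B * Uᴴ) = U * (Aᴴ * R⁻¹ * B) * Uᴴ from by
    simp only [Matrix.mul_assoc]]
  rw [Matrix.trace_mul_cycle, ← Matrix.mul_assoc, hUU, Matrix.one_mul]
  rw [hAH, hBdef]
  rw [show Ph * S * R⁻¹ * (S * Qh) = Ph * (S * R⁻¹ * S) * Qh from by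
    simp only [Matrix.mul_assoc], hSRS, Matrix.mul_one]
end

section
/- Let M be invertible, W unitary, and suppose MW = S D S^(-1) with S invertible and D positive definite. Then a positive definite A satisfies A·M·W positive definite if and only if A = S^(-*) C S^(-1) for some positive definite C commuting with D. -/
open scoped Classical
open Matrix
open scoped ComplexOrder

/-- Conjugation of a positive definite matrix by an invertible matrix is positive definite. -/
lemma aux_conj_posDef {n : ℕ} {C B : Matrix (Fin n) (Fin n) ℂ} (hC : C.PosDef)
    (hB : IsUnit B) : (Bᴴ * C * B).PosDef := by
  refine Matrix.PosDef.of_dotProduct_mulVec_pos (Matrix.isHermitian_conjTranspose_mul_mul B hC.1) fun x hx => ?_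
  have hinj : Function.Injective (B.mulVec) := Matrix.mulVec_injective_iff_isUnit.mpr hB
  have hBx : B *ᵥ x ≠ 0 := (hinj.ne_iff' (Matrix.mulVec_zero B)).2 hx
  simpa only [star_mulVec, dotProduct_mulVec, vecMul_vecMul] using hC.dotProduct_mulVec_pos hBx

/-- A Hermitian matrix with positive eigenvalues is positive definite. -/
lemma aux_posDef_of_eigenvalues_pos {n : ℕ} {X : Matrix (Fin n) (Fin n) ℂ}
    (hX : X.IsHermitian) (h : ∀ i, 0 < hX.eigenvalues i) : X.PosDef := by
  have hdiag : (Matrix.diagonal ((↑) ∘ hX.eigenvalues : Fin n → ℂ)).PosDef := by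
    rw [Matrix.posDef_diagonal_iff]
    intro i
    exact Complex.zero_lt_real.mpr (h i)
  have hU : IsUnit (star (hX.eigenvectorUnitary : Matrix (Fin n) (Fin n) ℂ)) :=
    ⟨⟨star (hX.eigenvectorUnitary : Matrix (Fin n) (Fin n) ℂ),
      (hX.eigenvectorUnitary : Matrix (Fin n) (Fin n) ℂ),
      Unitary.coe_star_mul_self hX.eigenvectorUnitary,
      Unitary.coe_mul_star_self hX.eigenvectorUnitary⟩, rfl⟩
  have hconj := aux_conj_posDef hdiag hU
  rw [Matrix.star_eq_conjTranspose, Matrix.conjTranspose_conjTranspose] at hconj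
  rw [hX.spectral_theorem]
  exact hconj

open scoped MatrixOrder in
/-- The product of two commuting positive definite matrices is positive definite. -/
lemma aux_mul_posDef {n : ℕ} {C D : Matrix (Fin n) (Fin n) ℂ} (hC : C.PosDef)
    (hD : D.PosDef) (hcomm : C * D = D * C) : (C * D).PosDef := by
  have hX : (C * D).IsHermitian := by
    unfold Matrix.IsHermitian
    rw [Matrix.conjTranspose_mul, hC.1.eq, hD.1.eq, ← hcomm]
  set R := CFC.sqrt D with hRdef
  have hR : R.PosSemidef := (CFC.sqrt_nonneg D).posSemidef
  have hRR : R * R = D := CFC.sqrt_mul_sqrt_self D hD.posSemidef.nonneg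
  have hRunit : IsUnit R := by
    have hdet : IsUnit (R.det * R.det) := by
      rw [← Matrix.det_mul, hRR]
      exact (Matrix.isUnit_iff_isUnit_det D).mp hD.isUnit
    exact (Matrix.isUnit_iff_isUnit_det R).mpr (isUnit_of_mul_isUnit_left hdet)
  have hY : (Rᴴ * C * R).PosDef := aux_conj_posDef hC hRunit
  rw [hR.1.eq] at hY
  apply aux_posDef_of_eigenvalues_pos hX
  intro i
  set μ : ℝ := hX.eigenvalues i with hμdef
  set v : Fin n → ℂ := ⇑(hX.eigenvectorBasis i) with hvdef
  have hv : (C * D) *ᵥ v = μ • v := hX.mulVec_eigenvectorBasis i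
  have hvne : v ≠ 0 := by
    intro hv0
    apply hX.eigenvectorBasis.orthonormal.ne_zero i
    ext j
    exact congrFun hv0 j
  have hinj : Function.Injective (R.mulVec) := Matrix.mulVec_injective_iff_isUnit.mpr hRunit
  set w : Fin n → ℂ := R *ᵥ v with hwdef
  have hwne : w ≠ 0 := (hinj.ne_iff' (Matrix.mulVec_zero R)).2 hvne
  have hYw : (R * C * R) *ᵥ w = μ • w := by
    rw [hwdef, ← Matrix.mulVec_mulVec, ← Matrix.mulVec_mulVec]
    have : R *ᵥ (R *ᵥ v) = D *ᵥ v := by rw [Matrix.mulVec_mulVec, hRR]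
    rw [this]
    have : C *ᵥ (D *ᵥ v) = μ • v := by rw [Matrix.mulVec_mulVec, hv]
    rw [this, Matrix.mulVec_smul]
  have hpos : (0 : ℂ) < star w ⬝ᵥ ((R * C * R) *ᵥ w) := hY.dotProduct_mulVec_pos hwne
  rw [hYw] at hpos
  have ht : (0 : ℂ) < star w ⬝ᵥ w := Matrix.dotProduct_star_self_pos_iff.mpr hwne
  have hdot : star w ⬝ᵥ (μ • w) = (μ : ℂ) * (star w ⬝ᵥ w) := by
    rw [dotProduct_smul]
    simp [Complex.real_smul]
  rw [hdot] at hpos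
  -- extract real inequality
  have hre : 0 < ((μ : ℂ) * (star w ⬝ᵥ w)).re := (Complex.pos_iff.mp hpos).1
  have htre : 0 < (star w ⬝ᵥ w).re := (Complex.pos_iff.mp ht).1
  have htim : (star w ⬝ᵥ w).im = 0 := ((Complex.pos_iff.mp ht).2).symm
  rw [Complex.mul_re, Complex.ofReal_re, Complex.ofReal_im, htim] at hre
  simp only [zero_mul, sub_zero] at hre
  nlinarith

/-- Given `MW = S D S⁻¹` with `D` positive definite, a positive definite `A` satisfies
`A·M·W` positive definite iff `A = (S⁻¹)ᴴ C S⁻¹` for some positive definite `C`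
commuting with `D`. -/
theorem posDef_mul_iff_commutant_param {d : ℕ} {M W S D A : Matrix (Fin d) (Fin d) ℂ}
    (hM : IsUnit M) (hW : W ∈ Matrix.unitaryGroup (Fin d) ℂ)
    (hS : IsUnit S) (hD : D.PosDef) (hMW : M * W = S * D * S⁻¹) (hA : A.PosDef) :
    (A * M * W).PosDef ↔
      ∃ C : Matrix (Fin d) (Fin d) ℂ, C.PosDef ∧ C * D = D * C ∧ A = (S⁻¹)ᴴ * C * S⁻¹ := by
  have hdet : IsUnit S.det := (Matrix.isUnit_iff_isUnit_det S).mp hS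
  have hSS : S * S⁻¹ = 1 := Matrix.mul_nonsing_inv S hdet
  have hS'S : S⁻¹ * S = 1 := Matrix.nonsing_inv_mul S hdet
  have hSinv : IsUnit S⁻¹ := Matrix.isUnit_nonsing_inv_iff.mpr hS
  have hAMW : A * M * W = A * (S * D * S⁻¹) := by rw [Matrix.mul_assoc, hMW]
  have hSHinvSH : (S⁻¹)ᴴ * Sᴴ = 1 := by
    rw [← Matrix.conjTranspose_mul, hSS, Matrix.conjTranspose_one]
  have hSHSHinv : Sᴴ * (S⁻¹)ᴴ = 1 := by
    rw [← Matrix.conjTranspose_mul, hS'S, Matrix.conjTranspose_one]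
  constructor
  · intro h
    refine ⟨Sᴴ * A * S, aux_conj_posDef hA hS, ?_, ?_⟩
    · -- commutation
      have hkey : Sᴴ * (A * M * W) * S = Sᴴ * A * S * D := by
        rw [hAMW]
        simp only [Matrix.mul_assoc]
        rw [hS'S, Matrix.mul_one]
      have hCD : (Sᴴ * A * S * D).PosDef := hkey ▸ aux_conj_posDef h hS
      have := hCD.1.eq
      rw [Matrix.conjTranspose_mul, (aux_conj_posDef hA hS).1.eq, hD.1.eq] at this
      exact this.symm
    · -- A = (S⁻¹)ᴴ * (Sᴴ * A * S) * S⁻¹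
      calc A = 1 * A * 1 := by rw [Matrix.one_mul, Matrix.mul_one]
        _ = ((S⁻¹)ᴴ * Sᴴ) * A * (S * S⁻¹) := by rw [hSHinvSH, hSS]
        _ = (S⁻¹)ᴴ * (Sᴴ * A * S) * S⁻¹ := by simp only [Matrix.mul_assoc]
  · rintro ⟨C, hCpos, hcomm, rfl⟩
    have hCD : (C * D).PosDef := aux_mul_posDef hCpos hD hcomm
    have heq : (S⁻¹)ᴴ * C * S⁻¹ * M * W = (S⁻¹)ᴴ * (C * D) * S⁻¹ := by
      rw [Matrix.mul_assoc ((S⁻¹)ᴴ * C * S⁻¹) M W, hMW]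
      simp only [Matrix.mul_assoc]
      rw [← Matrix.mul_assoc S⁻¹ S (D * S⁻¹), hS'S, Matrix.one_mul]
    rw [heq]
    exact aux_conj_posDef hCD hSinv
end
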